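/- For every basis Δ of Φ, every subset Δ_P ⊆ Δ and every w ∈ W(Φ), one has w·F^v_R(Δ, Δ_P) = F^v_R(w(Δ), w(Δ_P)). Moreover, if R is divisible, then for any basis Δ of Φ, V_R = ⋃_{w ∈ W(Φ)} w·C̄^v_{R,Δ}; in other words, the closed vector chamber C̄^v_{R,Δ} meets every W(Φ)-orbit in V_R. -/

import Mathlib

open scoped Classical TensorProduct

section RootSetup

variable {VZ : Type*} [AddCommGroup VZ]

/-- the additive map `α ⊗ id_R : V_R = V_ℤ ⊗ R → R` induced by a root `α`. -/
noncomputable def rootR (R : Type*) [AddCommGroup R] [LinearOrder R] [IsOrderedAddMonoid R] (α : VZ →ₗ[ℤ] ℤ) :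
    VZ ⊗[ℤ] R →ₗ[ℤ] R :=
  (TensorProduct.lid ℤ R).toLinearMap.comp (LinearMap.rTensor R α)

/-- `Δ` is a basis of the root system `Φ` (in the sense of Bourbaki): `Δ ⊆ Φ` is linearly
independent and every root is a linear combination of `Δ` with coefficients that are all
non-negative integers or all non-positive integers. -/
def IsBase (Φ Δ : Finset (VZ →ₗ[ℤ] ℤ)) : Prop :=
  Δ ⊆ Φ ∧ LinearIndependent ℤ (fun a : {x // x ∈ Δ} => (a : VZ →ₗ[ℤ] ℤ)) ∧
    ∀ β ∈ Φ, (∃ c : (VZ →ₗ[ℤ] ℤ) → ℕ, β = ∑ a ∈ Δ, (c a : ℤ) • a) ∨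
      ∃ c : (VZ →ₗ[ℤ] ℤ) → ℕ, β = -∑ a ∈ Δ, (c a : ℤ) • a

/-- `Φ⁺_Δ`, the positive roots with respect to the basis `Δ`. -/
noncomputable def PosRoots (Φ Δ : Finset (VZ →ₗ[ℤ] ℤ)) : Finset (VZ →ₗ[ℤ] ℤ) :=
  Φ.filter fun β => ∃ c : (VZ →ₗ[ℤ] ℤ) → ℕ, β = ∑ a ∈ Δ, (c a : ℤ) • a

/-- the open vector chamber `C^v_{R,Δ}`. -/
def chamberR (R : Type*) [AddCommGroup R] [LinearOrder R] [IsOrderedAddMonoid R] (Δ : Finset (VZ →ₗ[ℤ] ℤ)) :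
    Set (VZ ⊗[ℤ] R) :=
  {x | ∀ α ∈ Δ, 0 < rootR R α x}

/-- the closed vector chamber `C̄^v_{R,Δ}`. -/
def closedChamberR (R : Type*) [AddCommGroup R] [LinearOrder R] [IsOrderedAddMonoid R] (Δ : Finset (VZ →ₗ[ℤ] ℤ)) :
    Set (VZ ⊗[ℤ] R) :=
  {x | ∀ α ∈ Δ, 0 ≤ rootR R α x}

/-- the vector face `F^v_R(Δ, Δ_P)`. -/
def faceR (R : Type*) [AddCommGroup R] [LinearOrder R] [IsOrderedAddMonoid R] (Δ ΔP : Finset (VZ →ₗ[ℤ] ℤ)) :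
    Set (VZ ⊗[ℤ] R) :=
  {x | (∀ α ∈ ΔP, rootR R α x = 0) ∧ ∀ α ∈ Δ, α ∉ ΔP → 0 < rootR R α x}

/-- the Weyl group `W(Φ)`, generated by the reflections `r_α : x ↦ x − α(x)·α^∨`. -/
def Weyl (Φ : Finset (VZ →ₗ[ℤ] ℤ)) (coroot : (VZ →ₗ[ℤ] ℤ) → VZ) : Subgroup (VZ ≃ₗ[ℤ] VZ) :=
  Subgroup.closure {e : VZ ≃ₗ[ℤ] VZ | ∃ α ∈ Φ, ∀ x : VZ, e x = x - α x • coroot α}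

/-- the action of `w ∈ W(Φ)` on roots: `w(α) = α ∘ w⁻¹`. -/
def dAct (w : VZ ≃ₗ[ℤ] VZ) (α : VZ →ₗ[ℤ] ℤ) : VZ →ₗ[ℤ] ℤ :=
  α.comp w.symm.toLinearMap

/-- the action of `w ∈ W(Φ)` on `V_R = V_ℤ ⊗ R`. -/
noncomputable def tAct (R : Type*) [AddCommGroup R] [LinearOrder R] [IsOrderedAddMonoid R] (w : VZ ≃ₗ[ℤ] VZ) :
    VZ ⊗[ℤ] R ≃ₗ[ℤ] VZ ⊗[ℤ] R :=
  TensorProduct.congr w (LinearEquiv.refl ℤ R)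

end RootSetup


section Aux
variable {VZ : Type*} [AddCommGroup VZ]

variable {R : Type*} [AddCommGroup R] [LinearOrder R] [IsOrderedAddMonoid R]

lemma rootR_tmul (α : VZ →ₗ[ℤ] ℤ) (v : VZ) (r : R) : rootR R α (v ⊗ₜ r) = α v • r := by
  exact rfl

lemma tAct_tmul (w : VZ ≃ₗ[ℤ] VZ) (v : VZ) (r : R) : tAct R w (v ⊗ₜ r) = w v ⊗ₜ r := by
  erw [tAct, TensorProduct.congr_tmul]; rfl

lemma lemA (w : VZ ≃ₗ[ℤ] VZ) (β : VZ →ₗ[ℤ] ℤ) (x : VZ ⊗[ℤ] R) :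
    rootR R (dAct w β) (tAct R w x) = rootR R β x := by
  induction x using TensorProduct.induction_on with
  | zero => simp
  | tmul v r => rw [tAct_tmul, rootR_tmul, rootR_tmul]; simp [dAct]
  | add a b ha hb => simp [map_add, ha, hb]

lemma rootR_add (α β : VZ →ₗ[ℤ] ℤ) (x : VZ ⊗[ℤ] R) :
    rootR R (α + β) x = rootR R α x + rootR R β x := by
  induction x using TensorProduct.induction_on with
  | zero => simp
  | tmul v r => simp [rootR_tmul, add_smul]
  | add a b ha hb => simp only [map_add, ha, hb]; abel

lemma rootR_smul (k : ℤ) (α : VZ →ₗ[ℤ] ℤ) (x : VZ ⊗[ℤ] R) :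
    rootR R (k • α) x = k • rootR R α x := by
  induction x using TensorProduct.induction_on with
  | zero => simp
  | tmul v r => simp [rootR_tmul, smul_smul]
  | add a b ha hb => simp only [map_add, ha, hb, smul_add]

lemma rootR_neg (α : VZ →ₗ[ℤ] ℤ) (x : VZ ⊗[ℤ] R) : rootR R (-α) x = -rootR R α x := by
  have := rootR_smul (-1) α x; simpa using this

lemma rootR_sum {ι : Type*} (s : Finset ι) (f : ι → (VZ →ₗ[ℤ] ℤ)) (x : VZ ⊗[ℤ] R) :
    rootR R (∑ i ∈ s, f i) x = ∑ i ∈ s, rootR R (f i) x := by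
  induction s using Finset.cons_induction with
  | empty =>
      have : rootR R ((0:ℤ) • (0 : VZ →ₗ[ℤ] ℤ)) x = (0:ℤ) • rootR R (0 : VZ →ₗ[ℤ] ℤ) x :=
        rootR_smul 0 0 x
      simpa using this
  | cons i s hi ih => rw [Finset.sum_cons, Finset.sum_cons, rootR_add, ih]

lemma tAct_one (x : VZ ⊗[ℤ] R) : tAct R 1 x = x := by
  induction x using TensorProduct.induction_on with
  | zero => simp
  | tmul v r => rw [tAct_tmul]; rfl
  | add a b ha hb => simp [map_add, ha, hb]

lemma tAct_mul (w₁ w₂ : VZ ≃ₗ[ℤ] VZ) (x : VZ ⊗[ℤ] R) :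
    tAct R (w₁ * w₂) x = tAct R w₁ (tAct R w₂ x) := by
  induction x using TensorProduct.induction_on with
  | zero => simp
  | tmul v r => simp [tAct]; rfl
  | add a b ha hb => simp [map_add, ha, hb]

lemma dAct_inj (w : VZ ≃ₗ[ℤ] VZ) : Function.Injective (dAct w) := by
  intro α β h
  ext v
  have := LinearMap.congr_fun h (w v)
  simpa [dAct] using this

lemma tAct_symm_apply (w : VZ ≃ₗ[ℤ] VZ) (y : VZ ⊗[ℤ] R) :
    tAct R w (tAct R w.symm y) = y := by
  induction y using TensorProduct.induction_on with
  | zero => simp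
  | tmul v r => rw [tAct_tmul, tAct_tmul]; simp
  | add a b ha hb => simp [map_add, ha, hb]


lemma part1 (Δ ΔP : Finset (VZ →ₗ[ℤ] ℤ)) (w : VZ ≃ₗ[ℤ] VZ) :
    (fun y => tAct R w y) '' faceR R Δ ΔP =
      faceR R (Δ.image (dAct w)) (ΔP.image (dAct w)) := by
  ext y
  constructor
  · rintro ⟨x, ⟨h1, h2⟩, rfl⟩
    constructor
    · intro α hα
      rcases Finset.mem_image.mp hα with ⟨β, hβ, rfl⟩
      rw [lemA]; exact h1 β hβ
    · intro α hα hαP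
      rcases Finset.mem_image.mp hα with ⟨β, hβ, rfl⟩
      rw [lemA]
      exact h2 β hβ (fun h => hαP (Finset.mem_image_of_mem _ h))
  · rintro ⟨h1, h2⟩
    refine ⟨tAct R w.symm y, ⟨?_, ?_⟩, tAct_symm_apply w y⟩
    · intro α hα
      have := h1 (dAct w α) (Finset.mem_image_of_mem _ hα)
      rwa [← tAct_symm_apply w y, lemA] at this
    · intro α hα hαP
      have hne : dAct w α ∉ ΔP.image (dAct w) := by
        intro h
        rcases Finset.mem_image.mp h with ⟨β, hβ, hβα⟩
        exact hαP (dAct_inj w hβα ▸ hβ)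
      have := h2 (dAct w α) (Finset.mem_image_of_mem _ hα) hne
      rwa [← tAct_symm_apply w y, lemA] at this

section Refl
variable (coroot : (VZ →ₗ[ℤ] ℤ) → VZ) (α : VZ →ₗ[ℤ] ℤ)

noncomputable def reflMap : VZ →ₗ[ℤ] VZ :=
  LinearMap.id - (LinearMap.toSpanSingleton ℤ VZ (coroot α)).comp α

lemma reflMap_apply (v : VZ) : reflMap coroot α v = v - α v • coroot α := rfl

lemma reflMap_invol (h2 : α (coroot α) = 2) :
    (reflMap coroot α).comp (reflMap coroot α) = LinearMap.id := by
  ext v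
  simp only [LinearMap.comp_apply, LinearMap.id_apply, reflMap_apply, map_sub, map_smul,
    smul_eq_mul, h2]
  have h : coroot α - (2:ℤ) • coroot α = -coroot α := by
    rw [two_smul]; abel
  rw [h, smul_neg, sub_neg_eq_add]
  abel

noncomputable def reflE (h2 : α (coroot α) = 2) : VZ ≃ₗ[ℤ] VZ :=
  LinearEquiv.ofLinear (reflMap coroot α) (reflMap coroot α)
    (reflMap_invol coroot α h2) (reflMap_invol coroot α h2)

lemma reflE_apply (h2 : α (coroot α) = 2) (v : VZ) :
    reflE coroot α h2 v = v - α v • coroot α := rfl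

lemma reflE_mul_self (h2 : α (coroot α) = 2) :
    reflE coroot α h2 * reflE coroot α h2 = 1 := by
  apply LinearEquiv.ext
  intro v
  have : (reflE coroot α h2 * reflE coroot α h2) v
      = reflE coroot α h2 (reflE coroot α h2 v) := rfl
  rw [this]
  have := LinearMap.congr_fun (reflMap_invol coroot α h2) v
  simpa [reflE] using this

lemma dAct_reflE (h2 : α (coroot α) = 2) (β : VZ →ₗ[ℤ] ℤ) :
    dAct (reflE coroot α h2) β = β - β (coroot α) • α := by
  ext v
  have hsymm : (reflE coroot α h2).symm v = v - α v • coroot α := rfl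
  simp only [dAct, LinearMap.comp_apply, LinearEquiv.coe_toLinearMap, hsymm, map_sub,
    map_smul, LinearMap.sub_apply, LinearMap.smul_apply]
  simp [mul_comm]
end Refl



section Comb
variable {Φ Δ : Finset (VZ →ₗ[ℤ] ℤ)}

lemma hind (hbase : IsBase Φ Δ) (g : (VZ →ₗ[ℤ] ℤ) → ℤ)
    (hg : ∑ a ∈ Δ, g a • a = 0) : ∀ b ∈ Δ, g b = 0 := by
  intro b hb
  have hli := hbase.2.1
  rw [linearIndependent_iff'] at hli
  refine hli Finset.univ (fun i => g i.val) ?_ ⟨b, hb⟩ (Finset.mem_univ _)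
  rw [← hg]
  exact Finset.sum_coe_sort Δ (fun a => g a • a)

lemma single_sum (hα : α ∈ Δ) (k : ℤ) :
    ∑ a ∈ Δ, (if a = α then k else 0) • a = k • α := by
  rw [Finset.sum_eq_single_of_mem α hα]
  · simp
  · intro b _ hb
    simp [hb]

lemma mem_pos_of_mem_base (hbase : IsBase Φ Δ) (hα : α ∈ Δ) : α ∈ PosRoots Φ Δ := by
  refine Finset.mem_filter.mpr ⟨hbase.1 hα, fun b => if b = α then 1 else 0, ?_⟩
  rw [show (∑ a ∈ Δ, ((if a = α then (1:ℕ) else 0 : ℕ) : ℤ) • a)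
      = ∑ a ∈ Δ, (if a = α then (1:ℤ) else 0) • a from by
    apply Finset.sum_congr rfl; intro a _; split <;> simp, single_sum hα 1, one_smul]

lemma sigma_dichotomy (coroot : (VZ →ₗ[ℤ] ℤ) → VZ) (hbase : IsBase Φ Δ)
    (hrefl : ∀ α ∈ Φ, ∀ β ∈ Φ, β - β (coroot α) • α ∈ Φ)
    (hα : α ∈ Δ) (hβ : β ∈ PosRoots Φ Δ) :
    (∃ n : ℕ, β = (n : ℤ) • α) ∨ β - β (coroot α) • α ∈ PosRoots Φ Δ := by
  obtain ⟨hβΦ, c, hc⟩ := Finset.mem_filter.mp hβ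
  by_cases hall : ∀ b ∈ Δ, b ≠ α → c b = 0
  · left
    refine ⟨c α, ?_⟩
    rw [hc, Finset.sum_eq_single_of_mem α hα]
    intro b hb hbne
    rw [hall b hb hbne]
    simp
  · right
    push_neg at hall
    obtain ⟨b, hbΔ, hbne, hcb⟩ := hall
    have hσΦ : β - β (coroot α) • α ∈ Φ := hrefl α (hbase.1 hα) β hβΦ
    rcases hbase.2.2 _ hσΦ with ⟨d, hd⟩ | ⟨d, hd⟩
    · exact Finset.mem_filter.mpr ⟨hσΦ, d, hd⟩
    · exfalso
      set k := β (coroot α) with hk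
      have hS : (∑ a ∈ Δ, (d a : ℤ) • a) = k • α - β := by
        apply neg_injective
        rw [← hd]
        abel
      have hsum : ∑ a ∈ Δ, ((c a : ℤ) + (d a : ℤ) - (if a = α then k else 0)) • a = 0 := by
        simp only [sub_smul, add_smul]
        rw [Finset.sum_sub_distrib, Finset.sum_add_distrib, ← hc, hS, single_sum hα k]
        abel
      have := hind hbase _ hsum b hbΔ
      rw [if_neg hbne] at this
      omega

end Comb



lemma part2main {R : Type*} [AddCommGroup R] [LinearOrder R] [IsOrderedAddMonoid R]
    {Φ Δ : Finset (VZ →ₗ[ℤ] ℤ)} (coroot : (VZ →ₗ[ℤ] ℤ) → VZ)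
    (h0 : (0 : VZ →ₗ[ℤ] ℤ) ∉ Φ)
    (h2 : ∀ α ∈ Φ, α (coroot α) = 2)
    (hrefl : ∀ α ∈ Φ, ∀ β ∈ Φ, β - β (coroot α) • α ∈ Φ)
    (hbase : IsBase Φ Δ) :
    ∀ N : ℕ, ∀ x : VZ ⊗[ℤ] R,
      ((PosRoots Φ Δ).filter (fun β => rootR R β x < 0)).card ≤ N →
      ∃ w ∈ Weyl Φ coroot, x ∈ (fun y => tAct R w y) '' closedChamberR R Δ := by
  intro N
  induction N with
  | zero =>
    intro x hx
    refine ⟨1, one_mem _, x, ?_, tAct_one x⟩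
    intro α hα
    by_contra hneg
    push_neg at hneg
    have hmem : α ∈ (PosRoots Φ Δ).filter (fun β => rootR R β x < 0) :=
      Finset.mem_filter.mpr ⟨mem_pos_of_mem_base hbase hα, hneg⟩
    have := Finset.card_pos.mpr ⟨α, hmem⟩
    omega
  | succ N ih =>
    intro x hx
    by_cases hcham : ∀ α ∈ Δ, 0 ≤ rootR R α x
    · exact ⟨1, one_mem _, x, hcham, tAct_one x⟩
    push_neg at hcham
    obtain ⟨α, hαΔ, hαneg⟩ := hcham
    have hαΦ : α ∈ Φ := hbase.1 hαΔ
    set e := reflE coroot α (h2 α hαΦ) with he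
    set σ : (VZ →ₗ[ℤ] ℤ) → (VZ →ₗ[ℤ] ℤ) := fun β => β - β (coroot α) • α with hσdef
    have hσval : ∀ β : VZ →ₗ[ℤ] ℤ, (σ β) (coroot α) = -β (coroot α) := by
      intro β
      simp [hσdef, h2 α hαΦ, smul_eq_mul]
      ring
    have hσinv : ∀ β, σ (σ β) = β := by
      intro β
      have : σ (σ β) = σ β - (σ β) (coroot α) • α := rfl
      rw [this, hσval, hσdef]
      simp only [neg_smul, sub_neg_eq_add]
      abel
    have hσinj : Function.Injective σ := Function.Involutive.injective hσinv
    have hdActe : ∀ β, dAct e (σ β) = β := by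
      intro β
      rw [dAct_reflE]
      exact hσinv β
    have hσ_eq : ∀ (β : VZ →ₗ[ℤ] ℤ) (y : VZ ⊗[ℤ] R),
        rootR R β (tAct R e y) = rootR R (σ β) y := by
      intro β y
      have h1 := lemA (R := R) e (σ β) y
      rwa [hdActe] at h1
    set P := PosRoots Φ Δ
    set Q := P.filter (fun β => rootR R β x < 0) with hQ
    set Q' := P.filter (fun β => rootR R (σ β) x < 0) with hQ'
    have hQsub : Q'.image σ ⊆ Q := by
      intro γ hγ
      rcases Finset.mem_image.mp hγ with ⟨β, hβ, rfl⟩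
      rcases Finset.mem_filter.mp hβ with ⟨hβP, hβneg⟩
      rcases sigma_dichotomy coroot hbase hrefl hαΔ hβP with ⟨n, hn⟩ | hpos
      · exfalso
        have hn0 : n ≠ 0 := by
          rintro rfl
          rw [hn] at hβP
          simp only [Nat.cast_zero, zero_smul] at hβP
          exact h0 (Finset.mem_filter.mp hβP).1
        have hσn : σ β = (-(n:ℤ)) • α := by
          rw [hσdef]
          simp only [hn, LinearMap.smul_apply, h2 α hαΦ, smul_eq_mul, smul_smul]
          rw [← sub_smul]
          congr 1
          ring
        rw [hσn, rootR_smul] at hβneg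
        have hpos' : (0:R) < (-(n:ℤ)) • rootR R α x := by
          have h1 : (0:R) < (n:ℤ) • (-rootR R α x) :=
            zsmul_pos (neg_pos.mpr hαneg) (by exact_mod_cast Nat.pos_of_ne_zero hn0)
          rwa [smul_neg, ← neg_smul] at h1
        exact absurd hβneg (not_lt.mpr hpos'.le)
      · exact Finset.mem_filter.mpr ⟨hpos, hβneg⟩
    have hαQ : α ∈ Q := Finset.mem_filter.mpr ⟨mem_pos_of_mem_base hbase hαΔ, hαneg⟩
    have hαnot : α ∉ Q'.image σ := by
      intro h
      rcases Finset.mem_image.mp h with ⟨β, hβ, hσβ⟩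
      have hβeq : β = σ α := by rw [← hσinv β, hσβ]
      have hσα : σ α = -α := by
        rw [hσdef]
        simp only [h2 α hαΦ]
        rw [two_smul]
        abel
      rw [hσα] at hβeq
      have hβP := (Finset.mem_filter.mp hβ).1
      obtain ⟨hβΦ, c, hc⟩ := Finset.mem_filter.mp hβP
      have hsum : ∑ a ∈ Δ, ((c a : ℤ) + (if a = α then (1:ℤ) else 0)) • a = 0 := by
        simp only [add_smul]
        rw [Finset.sum_add_distrib, ← hc, single_sum hαΔ 1, one_smul, hβeq]
        abel
      have := hind hbase _ hsum α hαΔ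
      rw [if_pos rfl] at this
      omega
    have hss : Q'.image σ ⊂ Q :=
      (Finset.ssubset_iff_of_subset hQsub).mpr ⟨α, hαQ, hαnot⟩
    have hcardlt : Q'.card < Q.card := by
      rw [← Finset.card_image_of_injective Q' hσinj]
      exact Finset.card_lt_card hss
    have hfilt : P.filter (fun β => rootR R β (tAct R e x) < 0) = Q' := by
      apply Finset.filter_congr
      intro β _
      simp [hσ_eq]
    have hcard' : ((P.filter (fun β => rootR R β (tAct R e x) < 0))).card ≤ N := by
      rw [hfilt]
      omega
    obtain ⟨w', hw', y, hy, hwy⟩ := ih (tAct R e x) hcard'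
    refine ⟨e * w', mul_mem ?_ hw', y, hy, ?_⟩
    · exact Subgroup.subset_closure ⟨α, hαΦ, fun v => rfl⟩
    · show tAct R (e * w') y = x
      have hwy' : tAct R w' y = tAct R e x := hwy
      rw [tAct_mul, hwy', ← tAct_mul, reflE_mul_self, tAct_one]

end Aux

/-- **Statement 9.** For every basis `Δ` of `Φ`, `Δ_P ⊆ Δ` and `w ∈ W(Φ)` one has
`w·F^v_R(Δ, Δ_P) = F^v_R(w(Δ), w(Δ_P))`; moreover, if `R` is divisible, then
`V_R = ⋃_{w ∈ W(Φ)} w·C̄^v_{R,Δ}` for every basis `Δ`. -/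
theorem statement9 {VZ : Type*} [AddCommGroup VZ] [Module.Free ℤ VZ]
    {R : Type*} [AddCommGroup R] [LinearOrder R] [IsOrderedAddMonoid R] [Nontrivial R]
    (Φ : Finset (VZ →ₗ[ℤ] ℤ)) (coroot : (VZ →ₗ[ℤ] ℤ) → VZ)
    (h0 : (0 : VZ →ₗ[ℤ] ℤ) ∉ Φ)
    (h2 : ∀ α ∈ Φ, α (coroot α) = 2)
    (hrefl : ∀ α ∈ Φ, ∀ β ∈ Φ, β - β (coroot α) • α ∈ Φ)
    (hcorefl : ∀ α ∈ Φ, ∀ β ∈ Φ,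
      coroot (β - β (coroot α) • α) = coroot β - α (coroot β) • coroot α)
    (hspan : Submodule.span ℤ (coroot '' (Φ : Set (VZ →ₗ[ℤ] ℤ))) = ⊤)
    (hnd : ∀ x : VZ, (∀ α ∈ Φ, α x = 0) → x = 0)
    :
    (∀ Δ : Finset (VZ →ₗ[ℤ] ℤ), IsBase Φ Δ → ∀ ΔP : Finset (VZ →ₗ[ℤ] ℤ), ΔP ⊆ Δ →
      ∀ w ∈ Weyl Φ coroot,
        (fun y => tAct R w y) '' faceR R Δ ΔP =
          faceR R (Δ.image (dAct w)) (ΔP.image (dAct w))) ∧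
    ((∀ k : ℤ, k ≠ 0 → ∀ r : R, ∃ s : R, k • s = r) →
      ∀ Δ : Finset (VZ →ₗ[ℤ] ℤ), IsBase Φ Δ →
        ∀ x : VZ ⊗[ℤ] R, ∃ w ∈ Weyl Φ coroot,
          x ∈ (fun y => tAct R w y) '' closedChamberR R Δ) := by
  constructor
  · intro Δ _ ΔP _ w _
    exact part1 Δ ΔP w
  · intro _ Δ hbase x
    exact part2main coroot h0 h2 hrefl hbase _ x le_rfl
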